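/- Let p, q : X → [0,∞) be probability densities with respect to a measure μ (∫ p dμ = ∫ q dμ = 1), and let g be measurable with m ≤ g(q(x)/p(x)) ≤ M for μ-a.e. x. Then |∫ (q - p)·g(q/p) dμ| ≤ (1/2)(M - m)·∫ |q - p| dμ. -/

import Mathlib

open Set MeasureTheory

theorem delta_divergence_bound_tv
    {X : Type*} [MeasurableSpace X] (μ : Measure X)
    (p q : X → ℝ) (g : ℝ → ℝ)
    (hp0 : ∀ x, 0 ≤ p x) (hq0 : ∀ x, 0 ≤ q x)
    (hpm : Measurable p) (hqm : Measurable q) (hgm : Measurable g)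
    (hp : Integrable p μ) (hq : Integrable q μ)
    (hp1 : ∫ x, p x ∂μ = 1) (hq1 : ∫ x, q x ∂μ = 1)
    (m M : ℝ)
    (hbound : ∀ᵐ x ∂μ, m ≤ g (q x / p x) ∧ g (q x / p x) ≤ M)
    (hint : Integrable (fun x => (q x - p x) * g (q x / p x)) μ) :
    |∫ x, (q x - p x) * g (q x / p x) ∂μ| ≤
      (1 / 2) * (M - m) * ∫ x, |q x - p x| ∂μ := by
  set c : ℝ := (M + m) / 2 with hc
  have hqp : Integrable (fun x => q x - p x) μ := hq.sub hp
  have h0 : ∫ x, (q x - p x) ∂μ = 0 := by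
    rw [integral_sub hq hp, hp1, hq1]; ring
  have hintc : Integrable (fun x => (q x - p x) * c) μ := hqp.mul_const c
  have key : ∫ x, (q x - p x) * g (q x / p x) ∂μ
      = ∫ x, (q x - p x) * (g (q x / p x) - c) ∂μ := by
    have : ∫ x, (q x - p x) * (g (q x / p x) - c) ∂μ
        = ∫ x, (q x - p x) * g (q x / p x) ∂μ - ∫ x, (q x - p x) * c ∂μ := by
      rw [← integral_sub hint hintc]
      congr 1; funext x; ring
    rw [this, integral_mul_const, h0, zero_mul, sub_zero]
  rw [key]
  calc |∫ x, (q x - p x) * (g (q x / p x) - c) ∂μ|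
      ≤ ∫ x, |(q x - p x) * (g (q x / p x) - c)| ∂μ := by
        simpa only [Real.norm_eq_abs] using
          norm_integral_le_integral_norm (μ := μ) fun x => (q x - p x) * (g (q x / p x) - c)
    _ ≤ ∫ x, (1 / 2) * (M - m) * |q x - p x| ∂μ := by
        have hi1 : Integrable (fun x => (q x - p x) * (g (q x / p x) - c)) μ := by
          have := hint.sub hintc
          simpa [mul_sub, Pi.sub_def] using this
        apply integral_mono_ae hi1.abs (hqp.abs.const_mul _)
        filter_upwards [hbound] with x ⟨h1, h2⟩
        rw [abs_mul]
        have : |g (q x / p x) - c| ≤ (1 / 2) * (M - m) := by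
          rw [abs_le]; constructor <;> [skip; skip] <;> simp [hc] <;> linarith
        calc |q x - p x| * |g (q x / p x) - c|
            ≤ |q x - p x| * ((1 / 2) * (M - m)) := by
              exact mul_le_mul_of_nonneg_left this (abs_nonneg _)
          _ = (1 / 2) * (M - m) * |q x - p x| := by ring
    _ = (1 / 2) * (M - m) * ∫ x, |q x - p x| ∂μ := integral_const_mul _ _
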